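/- With M_k ~ NB(k+1, θ), N ≥ k+1, and M* = min(M_k, N), E((M*)²) = N² · I_{1−θ}(N−k, k+1) + ((k+1)(k+2)/θ²) · I_θ(k+3, N−k) − ((k+1)/θ) · I_θ(k+2, N−k). -/

import Mathlib

open MeasureTheory intervalIntegral

/-- The pmf of the negative binomial distribution `NB(r, θ)`:
`P(M = j) = C(j−1, r−1) θ^r (1−θ)^{j−r}` for `j ≥ r`. -/
noncomputable def nbPmf (r : ℕ) (θ : ℝ) (j : ℕ) : ℝ :=
  if r ≤ j then ((j - 1).choose (r - 1) : ℝ) * θ ^ r * (1 - θ) ^ (j - r) else 0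

/-- The regularized incomplete beta function `I_x(a, b)` (for positive integer parameters). -/
noncomputable def regIncBeta (x : ℝ) (a b : ℕ) : ℝ :=
  (∫ u in (0:ℝ)..x, u ^ (a - 1) * (1 - u) ^ (b - 1)) /
    (∫ u in (0:ℝ)..(1:ℝ), u ^ (a - 1) * (1 - u) ^ (b - 1))

/-- Negative binomial CDF = binomial tail identity. -/
lemma lemB (r m : ℕ) (p : ℝ) :
    ∑ t ∈ Finset.range (m+1), ((r+t).choose r : ℝ) * p^(r+1) * (1-p)^t
      = ∑ t ∈ Finset.range (m+1), ((r+m+1).choose (r+1+t) : ℝ) * p^(r+1+t) * (1-p)^(m-t) := by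
  induction m with
  | zero => simp
  | succ m ih =>
    have hz : ((r+m+1).choose (r+1+(m+1)) : ℝ) = 0 := by
      rw [Nat.choose_eq_zero_of_lt (by omega)]; simp
    have sum1 : ∑ t ∈ Finset.range (m+2), ((r+m+1).choose (r+1+t) : ℝ) * p^(r+1+t) * (1-p)^(m+1-t)
        = (1-p) * ∑ t ∈ Finset.range (m+1), ((r+m+1).choose (r+1+t) : ℝ) * p^(r+1+t) * (1-p)^(m-t) := by
      rw [Finset.sum_range_succ, hz, zero_mul, zero_mul, add_zero, Finset.mul_sum]
      apply Finset.sum_congr rfl; intro t ht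
      simp only [Finset.mem_range] at ht
      rw [show m+1-t = (m-t)+1 from by omega, pow_succ]; ring
    have sum2 : ∑ t ∈ Finset.range (m+2), ((r+m+1).choose (r+t) : ℝ) * p^(r+1+t) * (1-p)^(m+1-t)
        = ((r+m+1).choose r : ℝ) * p^(r+1) * (1-p)^(m+1)
          + p * ∑ t ∈ Finset.range (m+1), ((r+m+1).choose (r+1+t) : ℝ) * p^(r+1+t) * (1-p)^(m-t) := by
      rw [Finset.sum_range_succ', Finset.mul_sum, add_comm]
      congr 1
      · apply Finset.sum_congr rfl; intro t ht
        simp only [Finset.mem_range] at ht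
        rw [show r+(t+1) = r+1+t from by omega, show m+1-(t+1) = m-t from by omega,
          show r+1+(t+1) = (r+1+t)+1 from by omega, pow_succ]
        ring
    rw [Finset.sum_range_succ, ih]
    have expand : ∑ t ∈ Finset.range (m+1+1), ((r+(m+1)+1).choose (r+1+t) : ℝ) * p^(r+1+t) * (1-p)^(m+1-t)
        = (∑ t ∈ Finset.range (m+2), ((r+m+1).choose (r+t) : ℝ) * p^(r+1+t) * (1-p)^(m+1-t))
          + ∑ t ∈ Finset.range (m+2), ((r+m+1).choose (r+1+t) : ℝ) * p^(r+1+t) * (1-p)^(m+1-t) := by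
      rw [← Finset.sum_add_distrib]
      apply Finset.sum_congr rfl; intro t _
      rw [show r+(m+1)+1 = (r+m+1)+1 from by omega, show r+1+t = (r+t)+1 from by omega,
        Nat.choose_succ_succ]
      push_cast; ring
    rw [expand, sum1, sum2]
    set S := ∑ t ∈ Finset.range (m+1), ((r+m+1).choose (r+1+t) : ℝ) * p^(r+1+t) * (1-p)^(m-t) with hS
    ring

lemma hasDerivAt_S (a b : ℕ) (x : ℝ) :
    HasDerivAt (fun y : ℝ => ∑ t ∈ Finset.range (b+1),
        ((a+b+1).choose (a+1+t) : ℝ) * (y^(a+1+t) * (1-y)^(b-t)))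
      ((((a+b+1) * (a+b).choose a : ℕ) : ℝ) * (x^a * (1-x)^b)) x := by
  have key : ∀ t ∈ Finset.range (b+1),
      HasDerivAt (fun y : ℝ => ((a+b+1).choose (a+1+t) : ℝ) * (y^(a+1+t) * (1-y)^(b-t)))
        ((((a+b+1) * (a+b).choose (a+t) : ℕ) : ℝ) * (x^(a+t) * (1-x)^(b-t))
          - (((a+b+1) * (a+b).choose (a+t+1) : ℕ) : ℝ) * (x^(a+t+1) * (1-x)^(b-t-1))) x := by
    intro t ht
    simp only [Finset.mem_range] at ht
    have h1 : HasDerivAt (fun y : ℝ => y^(a+1+t)) (((a+1+t : ℕ) : ℝ) * x^(a+t)) x := by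
      have := hasDerivAt_pow (a+1+t) x
      simpa [show a+1+t-1 = a+t from by omega] using this
    have h2 : HasDerivAt (fun y : ℝ => (1-y)^(b-t)) (-(((b-t : ℕ) : ℝ) * (1-x)^(b-t-1))) x := by
      have hid : HasDerivAt (fun y : ℝ => 1 - y) (-1) x := by
        simpa using (hasDerivAt_id x).const_sub 1
      have := hid.pow (b-t)
      refine this.congr_deriv ?_
      ring
    have := ((h1.mul h2).const_mul (((a+b+1).choose (a+1+t) : ℕ) : ℝ))
    refine this.congr_deriv ?_
    have c1 : ((a+b+1) * (a+b).choose (a+t) : ℕ) = ((a+b+1).choose (a+1+t)) * (a+1+t) := by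
      have := Nat.add_one_mul_choose_eq (a+b) (a+t)
      simpa [Nat.succ_eq_add_one, show a+t+1 = a+1+t from by omega] using this
    have c2 : ((a+b+1) * (a+b).choose (a+t+1) : ℕ) = ((a+b+1).choose (a+1+t)) * (b-t) := by
      have h := Nat.choose_mul_succ_eq (a+b) (a+1+t)
      rw [show (a+b)+1 - (a+1+t) = b - t from by omega] at h
      rw [show a+t+1 = a+1+t from by omega, mul_comm, h]
    rw [c1, c2]
    push_cast
    ring
  have hsum := HasDerivAt.fun_sum key
  refine hsum.congr_deriv ?_
  rw [Finset.sum_sub_distrib]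
  have tele : ∀ (f : ℕ → ℝ), ∑ t ∈ Finset.range (b+1), f t - ∑ t ∈ Finset.range (b+1), f (t+1)
      = f 0 - f (b+1) := by
    intro f
    have := Finset.sum_range_sub' f (b+1)
    simp only [Finset.sum_sub_distrib] at this
    linarith [this]
  have := tele (fun t => (((a+b+1) * (a+b).choose (a+t) : ℕ) : ℝ) * (x^(a+t) * (1-x)^(b-t)))
  rw [show ∑ t ∈ Finset.range (b+1), (((a+b+1) * (a+b).choose (a+t+1) : ℕ) : ℝ) * (x^(a+t+1) * (1-x)^(b-t-1))
      = ∑ t ∈ Finset.range (b+1), (((a+b+1) * (a+b).choose (a+(t+1)) : ℕ) : ℝ) * (x^(a+(t+1)) * (1-x)^(b-(t+1))) from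
    Finset.sum_congr rfl (fun t ht => by
      rw [show a+t+1 = a+(t+1) from by omega, show b-t-1 = b-(t+1) from by omega])]
  rw [this]
  have hz : ((a+b).choose (a+(b+1)) : ℕ) = 0 := Nat.choose_eq_zero_of_lt (by omega)
  simp [hz]

lemma integral_S (a b : ℕ) (x : ℝ) :
    ∫ u in (0:ℝ)..x, u^a * (1-u)^b
      = (∑ t ∈ Finset.range (b+1), ((a+b+1).choose (a+1+t) : ℝ) * (x^(a+1+t) * (1-x)^(b-t)))
        / (((a+b+1) * (a+b).choose a : ℕ) : ℝ) := by
  have hcpos : 0 < (a+b+1) * (a+b).choose a :=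
    Nat.mul_pos (by omega) (Nat.choose_pos (by omega))
  have hc : (((a+b+1) * (a+b).choose a : ℕ) : ℝ) ≠ 0 := by
    exact_mod_cast hcpos.ne'
  have hderiv : ∀ y ∈ Set.uIcc (0:ℝ) x,
      HasDerivAt (fun y : ℝ => (∑ t ∈ Finset.range (b+1),
          ((a+b+1).choose (a+1+t) : ℝ) * (y^(a+1+t) * (1-y)^(b-t)))
            / (((a+b+1) * (a+b).choose a : ℕ) : ℝ))
        (y^a * (1-y)^b) y := by
    intro y _
    have := (hasDerivAt_S a b y).div_const ((((a+b+1) * (a+b).choose a : ℕ) : ℝ))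
    refine this.congr_deriv ?_
    exact (mul_div_cancel_left₀ _ hc)
  have hint : IntervalIntegrable (fun u : ℝ => u^a * (1-u)^b) MeasureTheory.volume 0 x :=
    ((continuous_pow a).mul ((continuous_const.sub continuous_id).pow b)).intervalIntegrable 0 x
  have := intervalIntegral.integral_eq_sub_of_hasDerivAt hderiv hint
  rw [this]
  have hF0 : (∑ t ∈ Finset.range (b+1),
      ((a+b+1).choose (a+1+t) : ℝ) * ((0:ℝ)^(a+1+t) * (1-0)^(b-t))) = 0 := by
    apply Finset.sum_eq_zero
    intro t _
    rw [zero_pow (by omega)]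
    ring
  rw [hF0]
  simp

lemma regIncBeta_eq (a b : ℕ) (x : ℝ) :
    regIncBeta x (a+1) (b+1)
      = ∑ t ∈ Finset.range (b+1), ((a+b+1).choose (a+1+t) : ℝ) * x^(a+1+t) * (1-x)^(b-t) := by
  have hcpos : 0 < (a+b+1) * (a+b).choose a :=
    Nat.mul_pos (by omega) (Nat.choose_pos (by omega))
  have hc : (((a+b+1) * (a+b).choose a : ℕ) : ℝ) ≠ 0 := by
    exact_mod_cast hcpos.ne'
  unfold regIncBeta
  simp only [Nat.add_sub_cancel]
  rw [integral_S, integral_S]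
  have h1 : ∑ t ∈ Finset.range (b+1), ((a+b+1).choose (a+1+t) : ℝ) * ((1:ℝ)^(a+1+t) * (1-1)^(b-t)) = 1 := by
    rw [Finset.sum_eq_single_of_mem b (Finset.self_mem_range_succ b)]
    · rw [show b - b = 0 from by omega, show a+1+b = a+b+1 from by omega, Nat.choose_self]
      norm_num
    · intro t ht htb
      simp only [Finset.mem_range] at ht
      rw [sub_self, zero_pow (by omega)]
      ring
  rw [h1, one_div, div_eq_mul_inv, inv_inv, div_mul_cancel₀ _ hc]
  apply Finset.sum_congr rfl
  intro t _
  ring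

/-- For `M_k ~ NB(k+1, θ)`, `N ≥ k+1` and `M* = min(M_k, N)`,
`E((M*)²) = N² · I_{1−θ}(N−k, k+1) + ((k+1)(k+2)/θ²) · I_θ(k+3, N−k)
  − ((k+1)/θ) · I_θ(k+2, N−k)`. -/
theorem second_moment_formula (k N : ℕ) (hN : k + 1 ≤ N) (θ : ℝ) (hθ0 : 0 < θ) (hθ1 : θ < 1) :
    (∑' j : ℕ, (min j N : ℝ) ^ 2 * nbPmf (k + 1) θ j)
      = (N : ℝ) ^ 2 * regIncBeta (1 - θ) (N - k) (k + 1)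
        + ((k + 1) * (k + 2) / θ ^ 2) * regIncBeta θ (k + 3) (N - k)
        - ((k + 1) / θ) * regIncBeta θ (k + 2) (N - k) := by
  obtain ⟨m, rfl⟩ : ∃ m, N = k + m + 1 := ⟨N - k - 1, by omega⟩
  have hθ : θ ≠ 0 := ne_of_gt hθ0
  have hq0 : (0:ℝ) < 1 - θ := by linarith
  have hqn : ‖1 - θ‖ < 1 := by
    rw [Real.norm_eq_abs, abs_of_pos hq0]; linarith
  -- shifted pmf
  have hshift : ∀ j, nbPmf (k+1) θ (j + (k+1)) = ((k+j).choose k : ℝ) * θ^(k+1) * (1-θ)^j := by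
    intro j
    unfold nbPmf
    rw [if_pos (by omega)]
    rw [show j + (k+1) - 1 = k + j from by omega, show k+1-1 = k from by omega,
      show j + (k+1) - (k+1) = j from by omega]
  -- summability of the shifted pmf
  have hsum0 : Summable (fun j => ((k+j).choose k : ℝ) * θ^(k+1) * (1-θ)^j) := by
    have h := summable_choose_mul_geometric_of_norm_lt_one (r := 1 - θ) k hqn
    have h2 := h.mul_left (θ^(k+1))
    apply h2.congr
    intro j
    rw [show j + k = k + j from by omega]
    ring
  have hs : Summable (nbPmf (k+1) θ) := by
    rw [← summable_nat_add_iff (k+1)]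
    exact hsum0.congr (fun j => (hshift j).symm)
  -- total mass one
  have htot : ∑' j, nbPmf (k+1) θ j = 1 := by
    rw [← hs.sum_add_tsum_nat_add (k+1)]
    have h0 : ∑ j ∈ Finset.range (k+1), nbPmf (k+1) θ j = 0 := by
      apply Finset.sum_eq_zero
      intro j hj
      simp only [Finset.mem_range] at hj
      unfold nbPmf
      rw [if_neg (by omega)]
    rw [h0, zero_add]
    calc ∑' j, nbPmf (k+1) θ (j + (k+1))
        = ∑' j, θ^(k+1) * (((k+j).choose k : ℝ) * (1-θ)^j) := by
          apply tsum_congr; intro j; rw [hshift j]; ring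
      _ = θ^(k+1) * ∑' j, (((k+j).choose k : ℝ) * (1-θ)^j) := tsum_mul_left
      _ = 1 := by
          have h := tsum_choose_mul_geometric_of_norm_lt_one (r := 1-θ) k hqn
          have hre : ∑' (j:ℕ), (((k+j).choose k : ℝ) * (1-θ)^j)
              = ∑' (j:ℕ), (((j+k).choose k : ℝ) * (1-θ)^j) := by
            apply tsum_congr; intro j; rw [show k + j = j + k from by omega]
          rw [hre, h, show (1:ℝ) - (1-θ) = θ from by ring]
          field_simp
  set N := k + m + 1 with hNdef
  -- summability of the summand
  have hf : Summable (fun j : ℕ => (min j N : ℝ)^2 * nbPmf (k+1) θ j) := by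
    rw [← summable_nat_add_iff (N+1)]
    have h2 : Summable (fun j : ℕ => ((N:ℝ))^2 * nbPmf (k+1) θ (j + (N+1))) :=
      (((summable_nat_add_iff (N+1)).2 hs).mul_left _)
    apply h2.congr
    intro j
    rw [min_eq_right (show (N:ℝ) ≤ ((j + (N+1) : ℕ) : ℝ) by exact_mod_cast (by omega : N ≤ j + (N+1)))]
  -- split the tsum
  rw [← hf.sum_add_tsum_nat_add (N+1)]
  -- tail sum
  have htail : ∑' j : ℕ, (min (((j + (N+1) : ℕ)) : ℝ) ((N : ℕ) : ℝ))^2 * nbPmf (k+1) θ (j + (N+1))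
      = (N:ℝ)^2 * (1 - ∑ j ∈ Finset.range (N+1), nbPmf (k+1) θ j) := by
    have e1 : ∑' j : ℕ, (min (((j + (N+1) : ℕ)) : ℝ) ((N : ℕ) : ℝ))^2 * nbPmf (k+1) θ (j + (N+1))
        = (N:ℝ)^2 * ∑' j, nbPmf (k+1) θ (j + (N+1)) := by
      rw [← tsum_mul_left]
      apply tsum_congr; intro j
      rw [min_eq_right (show (N:ℝ) ≤ ((j + (N+1) : ℕ) : ℝ) by exact_mod_cast (by omega : N ≤ j + (N+1)))]
    have e2 : ∑' j, nbPmf (k+1) θ (j + (N+1)) = 1 - ∑ j ∈ Finset.range (N+1), nbPmf (k+1) θ j := by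
      have := hs.sum_add_tsum_nat_add (N+1)
      rw [htot] at this
      linarith
    rw [e1, e2]
  rw [htail]
  -- head sum: drop min, reindex
  have hhead : ∑ j ∈ Finset.range (N+1), (min j N : ℝ)^2 * nbPmf (k+1) θ j
      = ∑ t ∈ Finset.range (m+1), ((k+1+t : ℕ) : ℝ)^2 * (((k+t).choose k : ℝ) * θ^(k+1) * (1-θ)^t) := by
    have e1 : ∀ j ∈ Finset.range (N+1), (min j N : ℝ)^2 * nbPmf (k+1) θ j
        = (j : ℝ)^2 * nbPmf (k+1) θ j := by
      intro j hj
      simp only [Finset.mem_range] at hj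
      rw [min_eq_left (show (j:ℝ) ≤ (N:ℝ) by exact_mod_cast (by omega : j ≤ N))]
    rw [Finset.sum_congr rfl e1]
    rw [show N + 1 = (k+1) + (m+1) from by omega, Finset.sum_range_add]
    have e2 : ∑ j ∈ Finset.range (k+1), (j : ℝ)^2 * nbPmf (k+1) θ j = 0 := by
      apply Finset.sum_eq_zero
      intro j hj
      simp only [Finset.mem_range] at hj
      unfold nbPmf
      rw [if_neg (by omega)]
      ring
    rw [e2, zero_add]
    apply Finset.sum_congr rfl
    intro t _
    rw [show k+1+t = t + (k+1) from by omega, hshift t]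
  rw [hhead]
  -- CDF reindex
  have hcdf : ∑ j ∈ Finset.range (N+1), nbPmf (k+1) θ j
      = ∑ t ∈ Finset.range (m+1), ((k+t).choose k : ℝ) * θ^(k+1) * (1-θ)^t := by
    rw [show N + 1 = (k+1) + (m+1) from by omega, Finset.sum_range_add]
    have e2 : ∑ j ∈ Finset.range (k+1), nbPmf (k+1) θ j = 0 := by
      apply Finset.sum_eq_zero
      intro j hj
      simp only [Finset.mem_range] at hj
      unfold nbPmf
      rw [if_neg (by omega)]
    rw [e2, zero_add]
    apply Finset.sum_congr rfl
    intro t _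
    rw [show k+1+t = t + (k+1) from by omega, hshift t]
  rw [hcdf]
  -- the three regularized incomplete beta values
  have hA : regIncBeta (1-θ) (N-k) (k+1)
      = ∑ t ∈ Finset.range (k+1), ((m+t).choose m : ℝ) * (1-θ)^(m+1) * θ^t := by
    rw [show N - k = m + 1 from by omega, regIncBeta_eq m k (1-θ), ← lemB m k (1-θ)]
    apply Finset.sum_congr rfl
    intro t _
    rw [show (1:ℝ) - (1 - θ) = θ from by ring]
  have hB1 : regIncBeta θ (k+2) (N-k)
      = ∑ t ∈ Finset.range (m+1), ((k+1+t).choose (k+1) : ℝ) * θ^(k+2) * (1-θ)^t := by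
    rw [show N - k = m + 1 from by omega, show k+2 = (k+1)+1 from by omega,
      regIncBeta_eq (k+1) m θ, ← lemB (k+1) m θ]
  have hB2 : regIncBeta θ (k+3) (N-k)
      = ∑ t ∈ Finset.range (m+1), ((k+2+t).choose (k+2) : ℝ) * θ^(k+3) * (1-θ)^t := by
    rw [show N - k = m + 1 from by omega, show k+3 = (k+2)+1 from by omega,
      regIncBeta_eq (k+2) m θ, ← lemB (k+2) m θ]
  rw [hA, hB1, hB2]
  -- tail identity : 1 - CDF = I_{1-θ}
  have hT : 1 - ∑ t ∈ Finset.range (m+1), ((k+t).choose k : ℝ) * θ^(k+1) * (1-θ)^t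
      = ∑ t ∈ Finset.range (k+1), ((m+t).choose m : ℝ) * (1-θ)^(m+1) * θ^t := by
    have hbin : (1:ℝ) = ∑ i ∈ Finset.range (N+1), θ^i * (1-θ)^(N-i) * (N.choose i : ℝ) := by
      calc (1:ℝ) = (θ + (1-θ))^N := by norm_num
        _ = ∑ i ∈ Finset.range (N+1), θ^i * (1-θ)^(N-i) * (N.choose i : ℝ) := add_pow θ (1-θ) N
    have hsplit : ∑ i ∈ Finset.range (N+1), θ^i * (1-θ)^(N-i) * (N.choose i : ℝ)
        = (∑ i ∈ Finset.range (k+1), θ^i * (1-θ)^(N-i) * (N.choose i : ℝ))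
          + ∑ t ∈ Finset.range (m+1), θ^(k+1+t) * (1-θ)^(N-(k+1+t)) * (N.choose (k+1+t) : ℝ) := by
      rw [show N + 1 = (k+1) + (m+1) from by omega, Finset.sum_range_add]
    have hD2 : ∑ t ∈ Finset.range (m+1), ((k+t).choose k : ℝ) * θ^(k+1) * (1-θ)^t
        = ∑ t ∈ Finset.range (m+1), θ^(k+1+t) * (1-θ)^(N-(k+1+t)) * (N.choose (k+1+t) : ℝ) := by
      rw [lemB k m θ]
      apply Finset.sum_congr rfl
      intro t ht
      simp only [Finset.mem_range] at ht
      rw [show N - (k+1+t) = m - t from by omega, hNdef]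
      ring
    have hA2 : ∑ t ∈ Finset.range (k+1), ((m+t).choose m : ℝ) * (1-θ)^(m+1) * θ^t
        = ∑ i ∈ Finset.range (k+1), θ^i * (1-θ)^(N-i) * (N.choose i : ℝ) := by
      have e0 : ∑ t ∈ Finset.range (k+1), ((m+t).choose m : ℝ) * (1-θ)^(m+1) * θ^t
          = ∑ t ∈ Finset.range (k+1), ((m+t).choose m : ℝ) * (1-θ)^(m+1) * (1-(1-θ))^t := by
        apply Finset.sum_congr rfl; intro t _
        rw [show (1:ℝ) - (1 - θ) = θ from by ring]
      rw [e0, lemB m k (1-θ)]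
      rw [← Finset.sum_range_reflect (fun i => θ^i * (1-θ)^(N-i) * (N.choose i : ℝ)) (k+1)]
      apply Finset.sum_congr rfl
      intro t ht
      simp only [Finset.mem_range] at ht
      rw [show (1:ℝ) - (1 - θ) = θ from by ring,
        show k + 1 - 1 - t = k - t from by omega,
        show N - (k - t) = m+1+t from by omega,
        show k - t = N - (m+1+t) from by omega,
        Nat.choose_symm (by omega : m+1+t ≤ N), hNdef]
      ring
    rw [hD2, hA2]
    rw [hsplit] at hbin
    linarith
  rw [hT]
  -- final algebra
  have hmain : ∑ t ∈ Finset.range (m+1), ((k+1+t : ℕ) : ℝ)^2 * (((k+t).choose k : ℝ) * θ^(k+1) * (1-θ)^t)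
      = ((k:ℝ) + 1) * ((k:ℝ) + 2) / θ^2 * ∑ t ∈ Finset.range (m+1), ((k+2+t).choose (k+2) : ℝ) * θ^(k+3) * (1-θ)^t
        - ((k:ℝ) + 1) / θ * ∑ t ∈ Finset.range (m+1), ((k+1+t).choose (k+1) : ℝ) * θ^(k+2) * (1-θ)^t := by
    rw [Finset.mul_sum, Finset.mul_sum, ← Finset.sum_sub_distrib]
    apply Finset.sum_congr rfl
    intro t _
    have h1 : ((k+1+t : ℕ) : ℝ) * ((k+t).choose k : ℝ) = ((k+1+t).choose (k+1) : ℝ) * ((k:ℝ)+1) := by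
      have := Nat.add_one_mul_choose_eq (k+t) k
      have h' : (k+t+1) * ((k+t).choose k) = ((k+1+t).choose (k+1)) * (k+1) := by
        rw [show k+1+t = (k+t)+1 from by omega]
        simpa [Nat.succ_eq_add_one] using this
      calc ((k+1+t : ℕ) : ℝ) * ((k+t).choose k : ℝ)
          = (((k+t+1) * ((k+t).choose k) : ℕ) : ℝ) := by push_cast; ring
        _ = ((((k+1+t).choose (k+1)) * (k+1) : ℕ) : ℝ) := by rw [h']
        _ = ((k+1+t).choose (k+1) : ℝ) * ((k:ℝ)+1) := by push_cast; ring
    have h2 : ((k+2+t : ℕ) : ℝ) * ((k+1+t).choose (k+1) : ℝ) = ((k+2+t).choose (k+2) : ℝ) * ((k:ℝ)+2) := by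
      have := Nat.add_one_mul_choose_eq (k+1+t) (k+1)
      have h' : (k+1+t+1) * ((k+1+t).choose (k+1)) = ((k+2+t).choose (k+2)) * (k+2) := by
        rw [show k+2+t = (k+1+t)+1 from by omega, show k+2 = (k+1)+1 from by omega]
        simpa [Nat.succ_eq_add_one] using this
      calc ((k+2+t : ℕ) : ℝ) * ((k+1+t).choose (k+1) : ℝ)
          = (((k+1+t+1) * ((k+1+t).choose (k+1)) : ℕ) : ℝ) := by push_cast; ring
        _ = ((((k+2+t).choose (k+2)) * (k+2) : ℕ) : ℝ) := by rw [h']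
        _ = ((k+2+t).choose (k+2) : ℝ) * ((k:ℝ)+2) := by push_cast; ring
    have hth2 : θ^2 ≠ 0 := pow_ne_zero 2 hθ
    push_cast at h1 h2 ⊢
    have e2 : ((k:ℝ)+1)*((k:ℝ)+2)/θ^2 * (((k+2+t).choose (k+2) : ℝ) * θ^(k+3) * (1-θ)^t)
        = ((k:ℝ)+1)*((k:ℝ)+2) * (((k+2+t).choose (k+2) : ℝ) * θ^(k+1) * (1-θ)^t) := by
      rw [show k+3 = (k+1)+2 from by omega, pow_add]
      field_simp
    have e1 : ((k:ℝ)+1)/θ * (((k+1+t).choose (k+1) : ℝ) * θ^(k+2) * (1-θ)^t)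
        = ((k:ℝ)+1) * (((k+1+t).choose (k+1) : ℝ) * θ^(k+1) * (1-θ)^t) := by
      rw [show k+2 = (k+1)+1 from by omega, pow_add, pow_one]
      field_simp
    rw [e2, e1]
    linear_combination (θ^(k+1) * (1-θ)^t * ((k:ℝ)+1)) * h2
      + (θ^(k+1) * (1-θ)^t * (((k:ℝ)+1+(t:ℝ)))) * h1
  rw [hmain]
  push_cast
  ring
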